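/- Let Θ be a nonempty Polish space and let E : P(Θ) → ℝ be continuous with respect to the topology of weak convergence and bounded below. Suppose that for every K ∈ ℕ the infimum of E over P_em^K(Θ) is attained, and denote A_K = min_{ρ ∈ P_em^K(Θ)} E(ρ). Then A_K → inf_{ρ ∈ P_em(Θ)} E(ρ) as K → ∞. -/

import Mathlib

open Filter Topology MeasureTheory BoundedContinuousFunction

/-- The set of uniform empirical probability measures on `K` (not necessarily distinct)
points of `Θ`, i.e. measures of the form `(1/K) ∑_{k=1}^K δ_{θ_k}`. -/
def PemK {Θ : Type*} [MeasurableSpace Θ] (K : ℕ) : Set (ProbabilityMeasure Θ) :=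
  {ρ | ∃ θs : Fin K → Θ,
    (ρ : Measure Θ) = (K : ENNReal)⁻¹ • ∑ k : Fin K, Measure.dirac (θs k)}

/-- The set of all uniform empirical probability measures on `Θ`. -/
def Pem (Θ : Type*) [MeasurableSpace Θ] : Set (ProbabilityMeasure Θ) :=
  ⋃ K ∈ {K : ℕ | 1 ≤ K}, PemK K

lemma lem_avg (K0 : ℕ) (hK0 : 0 < K0) (g : ℕ → ℝ) (hg : ∀ n, g (n + K0) = g n) :
    Tendsto (fun K : ℕ => (∑ i ∈ Finset.range K, g i) / K) atTop
      (𝓝 ((∑ i ∈ Finset.range K0, g i) / K0)) := by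
  set T := ∑ i ∈ Finset.range K0, g i with hT
  set C := ∑ i ∈ Finset.range K0, |g i| with hC
  have hCnn : 0 ≤ C := Finset.sum_nonneg fun i _ => abs_nonneg _
  have habsT : |T| ≤ C := Finset.abs_sum_le_sum_abs _ _
  have key : ∀ n, (∑ i ∈ Finset.range (n + K0), g i) = (∑ i ∈ Finset.range n, g i) + T := by
    intro n
    induction n with
    | zero => simp [hT]
    | succ n ih =>
      have h1 : n + 1 + K0 = (n + K0) + 1 := by ring
      rw [h1, Finset.sum_range_succ, ih, Finset.sum_range_succ, hg n]; ring
  have hS : ∀ q r, (∑ i ∈ Finset.range (K0 * q + r), g i)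
      = q * T + ∑ i ∈ Finset.range r, g i := by
    intro q
    induction q with
    | zero => intro r; simp
    | succ q ih =>
      intro r
      have h1 : K0 * (q + 1) + r = (K0 * q + r) + K0 := by ring
      rw [h1, key, ih]; push_cast; ring
  have hbound : ∀ K : ℕ, 1 ≤ K →
      |(∑ i ∈ Finset.range K, g i) / K - T / K0| ≤ 2 * C / K := by
    intro K hK
    set q := K / K0
    set r := K % K0
    have hKeq : K0 * q + r = K := Nat.div_add_mod K K0
    have hrlt : r < K0 := Nat.mod_lt _ hK0
    have hSr : |∑ i ∈ Finset.range r, g i| ≤ C := by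
      refine le_trans (Finset.abs_sum_le_sum_abs _ _) ?_
      exact Finset.sum_le_sum_of_subset_of_nonneg
        (Finset.range_subset_range.2 hrlt.le) (fun i _ _ => abs_nonneg _)
    have hKpos : (0:ℝ) < K := by exact_mod_cast hK
    have hK0pos : (0:ℝ) < K0 := by exact_mod_cast hK0
    have hKr : (K:ℝ) = K0 * q + r := by exact_mod_cast hKeq.symm
    rw [← hKeq, hS q r, hKeq]
    have heq : (q * T + ∑ i ∈ Finset.range r, g i) / K - T / K0
        = (K0 * (∑ i ∈ Finset.range r, g i) - r * T) / (K * K0) := by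
      field_simp
      rw [hKr]; ring
    rw [heq, abs_div, abs_of_pos (mul_pos hKpos hK0pos)]
    rw [div_le_div_iff₀ (mul_pos hKpos hK0pos) hKpos]
    have h1 : |K0 * (∑ i ∈ Finset.range r, g i) - r * T|
        ≤ K0 * C + r * C := by
      refine le_trans (abs_sub _ _) ?_
      gcongr
      · rw [abs_mul, abs_of_pos hK0pos]; gcongr
      · rw [abs_mul, abs_of_nonneg (by positivity : (0:ℝ) ≤ (r:ℕ))]; gcongr
    calc |K0 * (∑ i ∈ Finset.range r, g i) - r * T| * K
        ≤ (K0 * C + r * C) * K := by gcongr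
      _ ≤ (K0 * C + K0 * C) * K := by
          have : (r:ℝ) ≤ K0 := by exact_mod_cast hrlt.le
          gcongr
      _ = 2 * C * (K * K0) := by ring
  have h0 : Tendsto (fun K : ℕ => (2 * C) / K) atTop (𝓝 0) :=
    tendsto_const_div_atTop_nhds_zero_nat _
  have hdiff : Tendsto (fun K : ℕ =>
      (∑ i ∈ Finset.range K, g i) / K - T / K0) atTop (𝓝 0) := by
    apply squeeze_zero_norm' _ h0
    filter_upwards [eventually_ge_atTop 1] with K hK using hbound K hK
  have := hdiff.add (tendsto_const_nhds (x := T / K0))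
  simpa using this

lemma emp_isProb {Θ : Type*} [MeasurableSpace Θ] (K : ℕ) (hK : 0 < K) (φ : Fin K → Θ) :
    IsProbabilityMeasure ((K : ENNReal)⁻¹ • ∑ k : Fin K, Measure.dirac (φ k)) := by
  constructor
  simp only [Measure.smul_apply, Measure.coe_finset_sum, Finset.sum_apply,
    Measure.dirac_apply_of_mem (Set.mem_univ _), smul_eq_mul]
  rw [Finset.sum_const, Finset.card_univ, Fintype.card_fin, nsmul_eq_mul, mul_one,
    ENNReal.inv_mul_cancel (by exact_mod_cast hK.ne') (ENNReal.natCast_ne_top K)]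

lemma emp_integral {Θ : Type*} [MeasurableSpace Θ] [TopologicalSpace Θ]
    [OpensMeasurableSpace Θ] [T1Space Θ] (K : ℕ) (φ : Fin K → Θ) (f : Θ →ᵇ ℝ) :
    ∫ x, f x ∂((K : ENNReal)⁻¹ • ∑ k : Fin K, Measure.dirac (φ k))
      = (∑ k : Fin K, f (φ k)) / K := by
  rw [integral_smul_measure, integral_finset_sum_measure
    (fun k _ => f.integrable _)]
  simp only [integral_dirac]
  rw [ENNReal.toReal_inv, ENNReal.toReal_natCast, smul_eq_mul, inv_mul_eq_div]

/-- If `E` is continuous (weak topology) and bounded below, and for each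
`K ≥ 1` the infimum `A_K` of `E` over the `K`-particle empirical measures is attained at
`ρ^K`, then `A_K = E(ρ^K)` converges to the infimum of `E` over all empirical measures. -/
theorem stmt_4 {Θ : Type*} [TopologicalSpace Θ] [PolishSpace Θ]
    [MeasurableSpace Θ] [BorelSpace Θ] [Nonempty Θ]
    (E : ProbabilityMeasure Θ → ℝ) (hE : Continuous E)
    (hbdd : BddBelow (Set.range E))
    (ρK : ℕ → ProbabilityMeasure Θ)
    (hρK : ∀ K : ℕ, 1 ≤ K → ρK K ∈ PemK K ∧ ∀ ν ∈ PemK (Θ := Θ) K, E (ρK K) ≤ E ν) :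
    Tendsto (fun K => E (ρK K)) atTop (𝓝 (⨅ ρ : Pem Θ, E ρ)) := by
  set m := ⨅ ρ : Pem Θ, E ρ with hm
  have hbdd' : BddBelow (Set.range fun ρ : Pem Θ => E ρ) :=
    hbdd.mono (Set.range_comp_subset_range _ E)
  have hmem : ∀ K : ℕ, 1 ≤ K → ρK K ∈ Pem Θ := fun K hK =>
    Set.mem_biUnion hK (hρK K hK).1
  have hlow : ∀ K : ℕ, 1 ≤ K → m ≤ E (ρK K) := fun K hK =>
    ciInf_le hbdd' (⟨ρK K, hmem K hK⟩ : Pem Θ)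
  -- Pem is nonempty
  obtain ⟨θ0⟩ := ‹Nonempty Θ›
  have hne : Nonempty (Pem Θ) := by
    refine ⟨⟨⟨Measure.dirac θ0, inferInstance⟩, ?_⟩⟩
    refine Set.mem_biUnion (show (1:ℕ) ∈ {K : ℕ | 1 ≤ K} from by simp) ?_
    exact ⟨fun _ => θ0, by simp⟩
  rw [Metric.tendsto_atTop]
  intro ε hε
  -- near-minimizer
  obtain ⟨⟨ρ, hρmem⟩, hρlt⟩ :=
    exists_lt_of_ciInf_lt (show m < m + ε / 2 by linarith)
  simp only at hρlt
  rw [Pem, Set.mem_iUnion₂] at hρmem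
  obtain ⟨K0, hK0, θs, hθs⟩ := hρmem
  have hK0pos : 0 < K0 := hK0
  -- the approximating empirical measures
  set φ : ∀ K : ℕ, Fin K → Θ := fun K i => θs ⟨(i : ℕ) % K0, Nat.mod_lt _ hK0pos⟩ with hφ
  set ν : ℕ → ProbabilityMeasure Θ := fun K =>
    if h : 0 < K then ⟨_, emp_isProb K h (φ K)⟩ else ρ with hν
  have hνmem : ∀ K : ℕ, 1 ≤ K → ν K ∈ PemK K := by
    intro K hK
    refine ⟨φ K, ?_⟩
    simp only [hν, dif_pos (show 0 < K from hK)]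
    split_ifs with h
    · exact congrArg Subtype.val (dif_pos h)
    · exact (h (by omega)).elim
  have htν : Tendsto ν atTop (𝓝 ρ) := by
    rw [ProbabilityMeasure.tendsto_iff_forall_integral_tendsto]
    intro f
    set g : ℕ → ℝ := fun n => f (θs ⟨n % K0, Nat.mod_lt _ hK0pos⟩) with hg
    have hgper : ∀ n, g (n + K0) = g n := by
      intro n; simp only [hg, Nat.add_mod_right]
    have hlim := lem_avg K0 hK0pos g hgper
    have hρint : ∫ ω, f ω ∂(ρ : Measure Θ) = (∑ i ∈ Finset.range K0, g i) / K0 := by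
      rw [hθs, emp_integral]
      congr 1
      rw [← Fin.sum_univ_eq_sum_range]
      refine Finset.sum_congr rfl fun k _ => ?_
      have hk : (⟨(k:ℕ) % K0, Nat.mod_lt _ hK0pos⟩ : Fin K0) = k := by
        ext; simp [Nat.mod_eq_of_lt k.isLt]
      simp only [hg, hk]
    rw [hρint]
    refine hlim.congr' ?_
    filter_upwards [eventually_ge_atTop 1] with K hK
    have h1 : ((ν K : Measure Θ)) = (K : ENNReal)⁻¹ • ∑ k : Fin K, Measure.dirac (φ K k) := by
      simp only [hν, dif_pos (show 0 < K from hK)]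
      split_ifs with h
      · exact congrArg Subtype.val (dif_pos h)
      · exact (h (by omega)).elim
    rw [h1, emp_integral]
    congr 1
    rw [← Fin.sum_univ_eq_sum_range]
  have hEt : Tendsto (fun K => E (ν K)) atTop (𝓝 (E ρ)) := (hE.tendsto ρ).comp htν
  have hev : ∀ᶠ K in atTop, E (ν K) < m + ε :=
    hEt.eventually_lt_const (by linarith)
  have hfin : ∀ᶠ K in atTop, dist (E (ρK K)) m < ε := by
    filter_upwards [hev, eventually_ge_atTop 1] with K h1 h2
    have h3 := hlow K h2
    have h4 := (hρK K h2).2 (ν K) (hνmem K h2)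
    rw [Real.dist_eq, abs_of_nonneg (by linarith)]
    linarith
  exact eventually_atTop.1 hfin
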